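/- Let v : [0, x̲] → ℝ with 0 < x̲ ≤ 1 be three times continuously differentiable on [0, x̲), r, c > 0, and suppose v''(x) = r·√(2c)·√(v(x) − x), v(x) > x, v''(x) > 0 on [0, x̲), v' < 1 on [0, x̲), and the left limit of v' at x̲ satisfies lim_{x↑x̲} v'(x) = L < 1. Then v'''(x) ≤ r²c·(L − 1)/v''(x) < 0 for x near x̲, and since v''(x) → 0 as x → x̲, we have lim_{x↑x̲} v'''(x) = −∞. -/

import Mathlib

open Set Filter

/-- If the left limit of v' at the threshold is strictly below 1 and v'' → 0,
then v''' is bounded above by a negative quantity that blows down, so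
v''' → −∞ at the threshold. -/
theorem stmt6 (v : ℝ → ℝ) (r c xlow L : ℝ)
    (hr : 0 < r) (hc : 0 < c) (hxlow : xlow ∈ Ioc (0:ℝ) 1)
    (hv : ContDiffOn ℝ 3 v (Ico 0 xlow))
    (hode : ∀ x ∈ Ico (0:ℝ) xlow,
      deriv^[2] v x = r * Real.sqrt (2*c) * Real.sqrt (v x - x))
    (hgt : ∀ x ∈ Ico (0:ℝ) xlow, v x > x)
    (hpos : ∀ x ∈ Ico (0:ℝ) xlow, 0 < deriv^[2] v x)
    (hd1 : ∀ x ∈ Ico (0:ℝ) xlow, deriv v x < 1)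
    (hL : Tendsto (deriv v) (nhdsWithin xlow (Iio xlow)) (nhds L)) (hL1 : L < 1)
    (h2to0 : Tendsto (deriv^[2] v) (nhdsWithin xlow (Iio xlow)) (nhds 0)) :
    (∀ᶠ x in nhdsWithin xlow (Iio xlow),
      deriv^[3] v x ≤ r^2*c*(L-1)/deriv^[2] v x ∧
      r^2*c*(L-1)/deriv^[2] v x < 0) ∧
    Tendsto (deriv^[3] v) (nhdsWithin xlow (Iio xlow)) atBot := by
  obtain ⟨hx0, hx1⟩ := hxlow
  have hUopen : IsOpen (Ioo (0:ℝ) xlow) := isOpen_Ioo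
  have hUsub : Ioo (0:ℝ) xlow ⊆ Ico 0 xlow := Ioo_subset_Ico_self
  have hvU : ContDiffOn ℝ 3 v (Ioo 0 xlow) := hv.mono hUsub
  have hd1U : ContDiffOn ℝ 2 (deriv v) (Ioo 0 xlow) :=
    hvU.deriv_of_isOpen hUopen (by norm_num)
  have hd2U : ContDiffOn ℝ 1 (deriv^[2] v) (Ioo 0 xlow) := by
    have h : ContDiffOn ℝ 1 (deriv (deriv v)) (Ioo 0 xlow) :=
      hd1U.deriv_of_isOpen hUopen (by norm_num)
    exact h
  -- key identity for third derivative
  have hkey : ∀ x ∈ Ioo (0:ℝ) xlow,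
      deriv^[3] v x = r^2*c*(deriv v x - 1)/deriv^[2] v x := by
    intro x0 hx0'
    have hx0I : x0 ∈ Ico 0 xlow := hUsub hx0'
    have hb : 0 < deriv^[2] v x0 := hpos _ hx0I
    have hmem : Ioo (0:ℝ) xlow ∈ nhds x0 := hUopen.mem_nhds hx0'
    have hdv : DifferentiableAt ℝ v x0 :=
      ((hvU.differentiableOn (by norm_num)).differentiableAt hmem)
    have hv1 : HasDerivAt v (deriv v x0) x0 := hdv.hasDerivAt
    have hd2 : HasDerivAt (deriv^[2] v) (deriv^[3] v x0) x0 := by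
      have hda : DifferentiableAt ℝ (deriv^[2] v) x0 :=
        (hd2U.differentiableOn (by norm_num)).differentiableAt hmem
      have h := hda.hasDerivAt
      have heq3 : deriv (deriv^[2] v) x0 = deriv^[3] v x0 := by
        rw [show deriv^[3] v = deriv (deriv^[2] v) from rfl]
      rwa [heq3] at h
    have hF : HasDerivAt (fun x => (deriv^[2] v x)^2)
        (2 * deriv^[2] v x0 * deriv^[3] v x0) x0 := by
      simpa using hd2.fun_pow 2
    have hG : HasDerivAt (fun x => 2*r^2*c*(v x - x))
        (2*r^2*c*(deriv v x0 - 1)) x0 := by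
      simpa using ((hv1.sub (hasDerivAt_id x0)).const_mul (2*r^2*c))
    have heq : (fun x => (deriv^[2] v x)^2) =ᶠ[nhds x0]
        (fun x => 2*r^2*c*(v x - x)) := by
      filter_upwards [hmem] with y hy
      have hyI := hUsub hy
      rw [hode y hyI]
      have h2c : (0:ℝ) ≤ 2*c := by positivity
      have hvx : (0:ℝ) ≤ v y - y := le_of_lt (sub_pos.mpr (hgt y hyI))
      rw [mul_pow, mul_pow, Real.sq_sqrt h2c, Real.sq_sqrt hvx]
      ring
    have hF' : HasDerivAt (fun x => 2*r^2*c*(v x - x))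
        (2 * deriv^[2] v x0 * deriv^[3] v x0) x0 :=
      hF.congr_of_eventuallyEq heq.symm
    have huniq := hF'.unique hG
    rw [eq_div_iff hb.ne']
    linear_combination huniq / 2
  -- deriv v is strictly monotone on the open interval, hence ≤ L
  have hmono : StrictMonoOn (deriv v) (Ioo 0 xlow) := by
    apply strictMonoOn_of_deriv_pos (convex_Ioo 0 xlow) hd1U.continuousOn
    intro x hx
    rw [interior_Ioo] at hx
    have h2 : deriv (deriv v) x = deriv^[2] v x := rfl
    rw [h2]
    exact hpos x (hUsub hx)
  have hle : ∀ x ∈ Ioo (0:ℝ) xlow, deriv v x ≤ L := by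
    intro x hx
    refine ge_of_tendsto hL ?_
    filter_upwards [Ioo_mem_nhdsLT_of_mem
      (⟨hx.2, le_refl xlow⟩ : xlow ∈ Ioc x xlow)] with y hy
    exact (hmono hx ⟨lt_trans hx.1 hy.1, hy.2⟩ hy.1).le
  have hUev : Ioo (0:ℝ) xlow ∈ nhdsWithin xlow (Iio xlow) :=
    Ioo_mem_nhdsLT_of_mem ⟨hx0, le_refl xlow⟩
  have hbound : ∀ᶠ x in nhdsWithin xlow (Iio xlow),
      deriv^[3] v x ≤ r^2*c*(L-1)/deriv^[2] v x ∧
      r^2*c*(L-1)/deriv^[2] v x < 0 := by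
    filter_upwards [hUev] with x hx
    have hb := hpos x (hUsub hx)
    have h1 : deriv v x ≤ L := hle x hx
    have hrc : 0 < r^2*c := by positivity
    constructor
    · rw [hkey x hx]
      have hnum : r^2*c*(deriv v x - 1) ≤ r^2*c*(L-1) :=
        mul_le_mul_of_nonneg_left (by linarith) hrc.le
      gcongr
    · exact div_neg_of_neg_of_pos (mul_neg_of_pos_of_neg hrc (by linarith)) hb
  have htend : Tendsto (fun x => r^2*c*(L-1)/deriv^[2] v x)
      (nhdsWithin xlow (Iio xlow)) atBot := by
    have hpos' : ∀ᶠ x in nhdsWithin xlow (Iio xlow),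
        deriv^[2] v x ∈ Ioi (0:ℝ) := by
      filter_upwards [hUev] with x hx
      exact hpos x (hUsub hx)
    have h0 : Tendsto (deriv^[2] v) (nhdsWithin xlow (Iio xlow))
        (nhdsWithin 0 (Ioi 0)) :=
      tendsto_nhdsWithin_of_tendsto_nhds_of_eventually_within _ h2to0 hpos'
    have hinv : Tendsto (fun x => (deriv^[2] v x)⁻¹)
        (nhdsWithin xlow (Iio xlow)) atTop :=
      tendsto_inv_nhdsGT_zero.comp h0
    have hrc : 0 < r^2*c := by positivity
    have hneg : r^2*c*(L-1) < 0 := mul_neg_of_pos_of_neg hrc (by linarith)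
    have := (tendsto_const_mul_atBot_of_neg hneg).mpr hinv
    simpa [div_eq_mul_inv] using this
  refine ⟨hbound, tendsto_atBot_mono' _ ?_ htend⟩
  filter_upwards [hbound] with x hx using hx.1
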